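/- Assume D_y G(·, m) satisfies: (i) (y − y')·(D_yG(y,m) − D_yG(y',m)) ≥ −λ|y−y'|² for all y, y', m; (ii) |D_yG(y,m) − D_yG(y,m̃)| ≤ L·W₁(m, m̃). Let 0 < t < 1/(λ + L), and for each m let y^m(x) be the unique solution of y + t D_yG(y,m) = x. Then |y^m(x) − y^{m̃}(x)| ≤ (tL/(1 − tλ)) W₁(m, m̃) for all x, and tL/(1−tλ) < 1. -/

import Mathlib

/-- Stability of the optimal move in the measure argument. Here `M` is the
Wasserstein space `(P₁(ℝ^d), W₁)`, viewed abstractly as a metric space, and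
`DG y m` stands for `D_y G(y, m)`. If `D_y G` is `λ`-semi-monotone in `y` and
`L`-Lipschitz in `m`, and `0 < t < 1/(λ + L)`, then the solutions `y^m(x)` of
`y + t D_y G(y, m) = x` satisfy `‖y^m(x) - y^m̃(x)‖ ≤ (tL/(1 - tλ)) W₁(m, m̃)`,
with `tL/(1 - tλ) < 1`. -/
theorem optimal_move_measure_lipschitz (d : ℕ) (M : Type*) [MetricSpace M]
    (DG : EuclideanSpace ℝ (Fin d) → M → EuclideanSpace ℝ (Fin d))
    (lam L : ℝ) (hlam : 0 ≤ lam) (hL : 0 ≤ L)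
    (hmono : ∀ (y y' : EuclideanSpace ℝ (Fin d)) (m : M),
      -(lam * ‖y - y'‖ ^ 2) ≤ inner ℝ (y - y') (DG y m - DG y' m))
    (hlip : ∀ (y : EuclideanSpace ℝ (Fin d)) (m m' : M),
      ‖DG y m - DG y m'‖ ≤ L * dist m m')
    (t : ℝ) (ht : 0 < t) (ht' : t < 1 / (lam + L))
    (y : M → EuclideanSpace ℝ (Fin d) → EuclideanSpace ℝ (Fin d))
    (hy : ∀ (m : M) (x : EuclideanSpace ℝ (Fin d)), y m x + t • DG (y m x) m = x) :
    (∀ (m m' : M) (x : EuclideanSpace ℝ (Fin d)),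
      ‖y m x - y m' x‖ ≤ t * L / (1 - t * lam) * dist m m') ∧
      t * L / (1 - t * lam) < 1 := by
  -- first: lam + L > 0, t*(lam+L) < 1, 1 - t*lam > 0
  have hsum : 0 < lam + L := by
    by_contra h
    push_neg at h
    have : lam + L = 0 := le_antisymm h (by positivity)
    rw [this] at ht'
    simp at ht'
    linarith
  have htsum : t * (lam + L) < 1 := by
    rw [lt_div_iff₀ hsum] at ht'
    linarith
  have h1lam : 0 < 1 - t * lam := by nlinarith
  have hlt : t * L / (1 - t * lam) < 1 := by
    rw [div_lt_one h1lam]; nlinarith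
  refine ⟨fun m m' x => ?_, hlt⟩
  set u := y m x - y m' x with hu
  have key : u = t • (DG (y m' x) m' - DG (y m x) m) := by
    have h1 := hy m x
    have h2 := hy m' x
    have : y m x + t • DG (y m x) m = y m' x + t • DG (y m' x) m' := by rw [h1, h2]
    rw [hu, smul_sub]
    abel_nf
    linear_combination (norm := module) this
  have hnorm : ‖u‖ ^ 2 ≤ t * lam * ‖u‖ ^ 2 + t * L * dist m m' * ‖u‖ := by
    have h0 : (‖u‖ : ℝ) ^ 2 = inner ℝ u u := (real_inner_self_eq_norm_sq u).symm
    have h1 : (inner ℝ u u : ℝ) = t * inner ℝ u (DG (y m' x) m' - DG (y m x) m) := by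
      nth_rewrite 1 [key]
      rw [real_inner_smul_left, real_inner_comm]
    have hsplit : (inner ℝ u (DG (y m' x) m' - DG (y m x) m) : ℝ)
        = -(inner ℝ u (DG (y m x) m - DG (y m' x) m) : ℝ)
          + inner ℝ u (DG (y m' x) m' - DG (y m' x) m) := by
      rw [← inner_neg_right, ← inner_add_right]
      congr 1
      abel
    have hm : -(lam * ‖u‖ ^ 2) ≤ (inner ℝ u (DG (y m x) m - DG (y m' x) m) : ℝ) :=
      hmono (y m x) (y m' x) m
    have hl : (inner ℝ u (DG (y m' x) m' - DG (y m' x) m) : ℝ) ≤ L * dist m' m * ‖u‖ := by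
      calc (inner ℝ u (DG (y m' x) m' - DG (y m' x) m) : ℝ)
          ≤ ‖u‖ * ‖DG (y m' x) m' - DG (y m' x) m‖ := real_inner_le_norm _ _
        _ ≤ ‖u‖ * (L * dist m' m) := by
            have := hlip (y m' x) m' m
            exact mul_le_mul_of_nonneg_left this (norm_nonneg _)
        _ = L * dist m' m * ‖u‖ := by ring
    rw [dist_comm m' m] at hl
    rw [h0, h1]
    have : (inner ℝ u (DG (y m' x) m' - DG (y m x) m) : ℝ)
        ≤ lam * ‖u‖ ^ 2 + L * dist m m' * ‖u‖ := by
      rw [hsplit]; linarith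
    nlinarith
  rcases eq_or_lt_of_le (norm_nonneg u) with h | h
  · rw [← h]; positivity
  · rw [div_mul_eq_mul_div, le_div_iff₀ h1lam]
    nlinarith
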